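/- Pathwise differentiability of the mediation functional with the claimed influence function (the core of Theorem 1 for finite-support data): for every differentiable one-parameter family (p_t) of strictly positive joint probability mass functions on 𝒴×𝒮×{0,1}×𝒳 with p_0 equal to the pmf of O = (Y,M,E,X), the map t ↦ θ(t) is differentiable at t = 0 and dθ(t)/dt|_{t=0} = E[ S · U ], where θ(t) := Σ_{m,x} E_t(Y|E=1,M=m,X=x)·f_t(m|E=0,X=x)·f_t(x) is the mediation functional computed under p_t [conditional means, conditional pmfs and marginals formed as ratios of sums of p_t], U := (d/dt) log p_t(Y,M,E,X)|_{t=0} is the score, and S is the efficient influence function S := 1{E=1}·[P(M=M|E=0,X)/(P(E=1|X)·P(M=M|E=1,X))]·(Y − b(M,X)) + [1{E=0}/P(E=0|X)]·(b(M,X) − η(X)) + η(X) − θ0. -/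

import Mathlib

open scoped BigOperators

/-- The sample space of the observed data `O = (Y, M, E, X)`, where `Y` takes values in a
finite set `𝒴` of reals (encoded by a finite type `𝒴` with a value map), `M` in a finite
set `𝒮`, `E` in `{0,1}` (encoded as `Bool`) and `X` in a finite set `𝒳`. -/
abbrev Obs (𝒴 𝒮 𝒳 : Type*) := 𝒴 × 𝒮 × Bool × 𝒳

noncomputable section

variable {𝒴 𝒮 𝒳 : Type*} [Fintype 𝒴] [Fintype 𝒮] [Fintype 𝒳]

/-- Marginal pmf of `X`: `f(x) = Σ_{y,m,e} p(y,m,e,x)`. -/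
def margX (p : Obs 𝒴 𝒮 𝒳 → ℝ) (x : 𝒳) : ℝ :=
  ∑ y : 𝒴, ∑ m : 𝒮, ∑ e : Bool, p (y, m, e, x)

/-- Joint pmf of `(E, X)`. -/
def jointEX (p : Obs 𝒴 𝒮 𝒳 → ℝ) (e : Bool) (x : 𝒳) : ℝ :=
  ∑ y : 𝒴, ∑ m : 𝒮, p (y, m, e, x)

/-- Joint pmf of `(M, E, X)`. -/
def jointMEX (p : Obs 𝒴 𝒮 𝒳 → ℝ) (m : 𝒮) (e : Bool) (x : 𝒳) : ℝ :=
  ∑ y : 𝒴, p (y, m, e, x)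

/-- Conditional pmf `P(E=e | X=x)` computed under `p`, as a ratio of sums. -/
def fE (p : Obs 𝒴 𝒮 𝒳 → ℝ) (e : Bool) (x : 𝒳) : ℝ :=
  jointEX p e x / margX p x

/-- Conditional pmf `P(M=m | E=e, X=x)` computed under `p`, as a ratio of sums. -/
def fM (p : Obs 𝒴 𝒮 𝒳 → ℝ) (m : 𝒮) (e : Bool) (x : 𝒳) : ℝ :=
  jointMEX p m e x / jointEX p e x

/-- Outcome regression `b(m,x) = E(Y | E=1, M=m, X=x)` computed under `p`, where
`val : 𝒴 → ℝ` gives the real values of the outcome. -/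
def bFun (val : 𝒴 → ℝ) (p : Obs 𝒴 𝒮 𝒳 → ℝ) (m : 𝒮) (x : 𝒳) : ℝ :=
  (∑ y : 𝒴, val y * p (y, m, true, x)) / jointMEX p m true x

/-- `η(x) = Σ_m b(m,x)·P(M=m | E=0, X=x)` computed under `p`. -/
def etaFun (val : 𝒴 → ℝ) (p : Obs 𝒴 𝒮 𝒳 → ℝ) (x : 𝒳) : ℝ :=
  ∑ m : 𝒮, bFun val p m x * fM p m false x

/-- The mediation functional
`θ(p) = Σ_{m,x} E_p(Y|E=1,M=m,X=x)·f_p(m|E=0,X=x)·f_p(x)` computed under the pmf `p`. -/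
def thetaP (val : 𝒴 → ℝ) (p : Obs 𝒴 𝒮 𝒳 → ℝ) : ℝ :=
  ∑ x : 𝒳, etaFun val p x * margX p x

/-- The efficient influence function `S` of the mediation functional:
`S := 1{E=1}·[P(M=M|E=0,X)/(P(E=1|X)·P(M=M|E=1,X))]·(Y − b(M,X))
  + [1{E=0}/P(E=0|X)]·(b(M,X) − η(X)) + η(X) − θ0`. -/
def effIF (val : 𝒴 → ℝ) (p : Obs 𝒴 𝒮 𝒳 → ℝ) : Obs 𝒴 𝒮 𝒳 → ℝ :=
  fun o =>
    (if o.2.2.1 then (1:ℝ) else 0) *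
        (fM p o.2.1 false o.2.2.2 / (fE p true o.2.2.2 * fM p o.2.1 true o.2.2.2)) *
        (val o.1 - bFun val p o.2.1 o.2.2.2) +
      (if o.2.2.1 then (0:ℝ) else 1) / fE p false o.2.2.2 *
        (bFun val p o.2.1 o.2.2.2 - etaFun val p o.2.2.2) +
      etaFun val p o.2.2.2 - thetaP val p

end

/-- pathwise differentiability of the mediation functional with the claimed
efficient influence function: for every differentiable one-parameter family `(p_t)` of
strictly positive pmfs with `p_0 = p`, `t ↦ θ(p_t)` is differentiable at `0` with
derivative `E[S·U]`, `U` the score. -/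
theorem mediation_pathwise_differentiability
    {𝒴 𝒮 𝒳 : Type*} [Fintype 𝒴] [Fintype 𝒮] [Fintype 𝒳] (val : 𝒴 → ℝ)
    (p : Obs 𝒴 𝒮 𝒳 → ℝ)
    (hpos : ∀ o, 0 < p o) (hsum : ∑ o : Obs 𝒴 𝒮 𝒳, p o = 1)
    (ε : ℝ) (hε : 0 < ε) (pt : ℝ → Obs 𝒴 𝒮 𝒳 → ℝ)
    (hpt0 : pt 0 = p)
    (hptpos : ∀ t, |t| < ε → ∀ o, 0 < pt t o)
    (hptsum : ∀ t, |t| < ε → ∑ o : Obs 𝒴 𝒮 𝒳, pt t o = 1)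
    (hdiff : ∀ o, DifferentiableAt ℝ (fun t => pt t o) 0) :
    HasDerivAt (fun t => thetaP val (pt t))
      (∑ o : Obs 𝒴 𝒮 𝒳, p o * (effIF val p o * deriv (fun t => Real.log (pt t o)) 0)) 0 := by
  classical
  obtain ⟨q, hq⟩ : ∃ q : Obs 𝒴 𝒮 𝒳 → ℝ, ∀ o, HasDerivAt (fun t => pt t o) (q o) 0 :=
    ⟨fun o => deriv (fun t => pt t o) 0, fun o => (hdiff o).hasDerivAt⟩
  haveI hObs : Nonempty (Obs 𝒴 𝒮 𝒳) := by
    by_contra h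
    rw [not_nonempty_iff] at h
    rw [Finset.univ_eq_empty, Finset.sum_empty] at hsum
    exact one_ne_zero hsum.symm
  haveI hYne : Nonempty 𝒴 := ⟨hObs.some.1⟩
  haveI hSne : Nonempty 𝒮 := ⟨hObs.some.2.1⟩
  haveI hXne : Nonempty 𝒳 := ⟨hObs.some.2.2.2⟩
  have hMEX : ∀ (m : 𝒮) (e : Bool) (x : 𝒳), jointMEX p m e x ≠ 0 := fun m e x =>
    (Finset.sum_pos (fun y _ => hpos _) Finset.univ_nonempty).ne'
  have hEX : ∀ (e : Bool) (x : 𝒳), jointEX p e x ≠ 0 := fun e x =>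
    (Finset.sum_pos (fun y _ => Finset.sum_pos (fun m _ => hpos _) Finset.univ_nonempty)
      Finset.univ_nonempty).ne'
  have hMX : ∀ x : 𝒳, margX p x ≠ 0 := fun x =>
    (Finset.sum_pos (fun y _ => Finset.sum_pos (fun m _ =>
      Finset.sum_pos (fun e _ => hpos _) Finset.univ_nonempty) Finset.univ_nonempty)
      Finset.univ_nonempty).ne'
  have hzero : ∑ o : Obs 𝒴 𝒮 𝒳, q o = 0 := by
    have h1 : HasDerivAt (fun t => ∑ o : Obs 𝒴 𝒮 𝒳, pt t o) (∑ o : Obs 𝒴 𝒮 𝒳, q o) 0 :=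
      HasDerivAt.fun_sum fun o _ => hq o
    have h2 : (fun t => ∑ o : Obs 𝒴 𝒮 𝒳, pt t o) =ᶠ[nhds 0] fun _ => (1 : ℝ) := by
      filter_upwards [Metric.ball_mem_nhds (0 : ℝ) hε] with t ht
      exact hptsum t (by simpa [Real.dist_eq] using ht)
    have h3 : HasDerivAt (fun t => ∑ o : Obs 𝒴 𝒮 𝒳, pt t o) 0 0 :=
      (hasDerivAt_const (0 : ℝ) (1 : ℝ)).congr_of_eventuallyEq h2
    exact h1.unique h3
  have hlog : ∀ o : Obs 𝒴 𝒮 𝒳, deriv (fun t => Real.log (pt t o)) 0 = q o / p o := by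
    intro o
    have h := (hq o).log (by show pt 0 o ≠ 0; rw [hpt0]; exact (hpos o).ne')
    simp only [hpt0] at h
    exact h.deriv
  -- derivative of b(m,x) along the path
  have hb : ∀ (m : 𝒮) (x : 𝒳), HasDerivAt (fun t => bFun val (pt t) m x)
      (((∑ y : 𝒴, val y * q (y, m, true, x)) * jointMEX p m true x - (∑ y : 𝒴, val y * p (y, m, true, x)) * (∑ y : 𝒴, q (y, m, true, x))) / (jointMEX p m true x) ^ 2) 0 := by
    intro m x
    have h1 : HasDerivAt (fun t => ∑ y : 𝒴, val y * pt t (y, m, true, x))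
        (∑ y : 𝒴, val y * q (y, m, true, x)) 0 :=
      HasDerivAt.fun_sum fun y _ => (hq (y, m, true, x)).const_mul (val y)
    have h2 : HasDerivAt (fun t => ∑ y : 𝒴, pt t (y, m, true, x))
        (∑ y : 𝒴, q (y, m, true, x)) 0 :=
      HasDerivAt.fun_sum fun y _ => hq (y, m, true, x)
    have h3 : (∑ y : 𝒴, pt 0 (y, m, true, x)) ≠ 0 := by rw [hpt0]; exact hMEX m true x
    simpa only [bFun, jointMEX, hpt0] using h1.fun_div h2 h3
  -- derivative of fM(m | 0, x) along the path
  have hfM0 : ∀ (m : 𝒮) (x : 𝒳), HasDerivAt (fun t => fM (pt t) m false x)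
      (((∑ y : 𝒴, q (y, m, false, x)) * jointEX p false x - jointMEX p m false x * (∑ y : 𝒴, ∑ m' : 𝒮, q (y, m', false, x))) / (jointEX p false x) ^ 2) 0 := by
    intro m x
    have h1 : HasDerivAt (fun t => ∑ y : 𝒴, pt t (y, m, false, x))
        (∑ y : 𝒴, q (y, m, false, x)) 0 :=
      HasDerivAt.fun_sum fun y _ => hq (y, m, false, x)
    have h2 : HasDerivAt (fun t => ∑ y : 𝒴, ∑ m' : 𝒮, pt t (y, m', false, x))
        (∑ y : 𝒴, ∑ m' : 𝒮, q (y, m', false, x)) 0 :=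
      HasDerivAt.fun_sum fun y _ => HasDerivAt.fun_sum fun m' _ => hq (y, m', false, x)
    have h3 : (∑ y : 𝒴, ∑ m' : 𝒮, pt 0 (y, m', false, x)) ≠ 0 := by
      rw [hpt0]; exact hEX false x
    simpa only [fM, jointMEX, jointEX, hpt0] using h1.fun_div h2 h3
  -- derivative of margX along the path
  have hFd : ∀ x : 𝒳, HasDerivAt (fun t => margX (pt t) x)
      (∑ y : 𝒴, ∑ m : 𝒮, ∑ e : Bool, q (y, m, e, x)) 0 := by
    intro x
    have h1 : HasDerivAt (fun t => ∑ y : 𝒴, ∑ m : 𝒮, ∑ e : Bool, pt t (y, m, e, x))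
        (∑ y : 𝒴, ∑ m : 𝒮, ∑ e : Bool, q (y, m, e, x)) 0 :=
      HasDerivAt.fun_sum fun y _ => HasDerivAt.fun_sum fun m _ => HasDerivAt.fun_sum fun e _ =>
        hq (y, m, e, x)
    simpa only [margX] using h1
  -- derivative of etaFun along the path
  have hEta : ∀ x : 𝒳, HasDerivAt (fun t => etaFun val (pt t) x)
      (∑ m : 𝒮, ((((∑ y : 𝒴, val y * q (y, m, true, x)) * jointMEX p m true x - (∑ y : 𝒴, val y * p (y, m, true, x)) * (∑ y : 𝒴, q (y, m, true, x))) / (jointMEX p m true x) ^ 2) * fM p m false x + bFun val p m x * (((∑ y : 𝒴, q (y, m, false, x)) * jointEX p false x - jointMEX p m false x * (∑ y : 𝒴, ∑ m' : 𝒮, q (y, m', false, x))) / (jointEX p false x) ^ 2))) 0 := by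
    intro x
    have h1 := HasDerivAt.fun_sum (fun (m : 𝒮) (_ : m ∈ Finset.univ) => ((hb m x).mul (hfM0 m x)))
    simp only [etaFun]
    simpa only [hpt0, Pi.mul_def] using h1
  -- derivative of the mediation functional along the path
  have Htheta : HasDerivAt (fun t => thetaP val (pt t)) (∑ x : 𝒳, ((∑ m : 𝒮, ((((∑ y : 𝒴, val y * q (y, m, true, x)) * jointMEX p m true x - (∑ y : 𝒴, val y * p (y, m, true, x)) * (∑ y : 𝒴, q (y, m, true, x))) / (jointMEX p m true x) ^ 2) * fM p m false x + bFun val p m x * (((∑ y : 𝒴, q (y, m, false, x)) * jointEX p false x - jointMEX p m false x * (∑ y : 𝒴, ∑ m' : 𝒮, q (y, m', false, x))) / (jointEX p false x) ^ 2))) * margX p x + etaFun val p x * (∑ y : 𝒴, ∑ m : 𝒮, ∑ e : Bool, q (y, m, e, x)))) 0 := by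
    simp only [thetaP]
    refine HasDerivAt.fun_sum fun x _ => ?_
    have h1 := (hEta x).mul (hFd x)
    simpa only [hpt0, Pi.mul_def] using h1
  -- sums over the observation space split as iterated sums
  have hobs : ∀ g : Obs 𝒴 𝒮 𝒳 → ℝ, ∑ o : Obs 𝒴 𝒮 𝒳, g o
      = ∑ x : 𝒳, ∑ m : 𝒮, ((∑ y : 𝒴, g (y, m, true, x)) + ∑ y : 𝒴, g (y, m, false, x)) := by
    intro g
    have swap3 : ∀ f : 𝒴 → 𝒮 → 𝒳 → ℝ, (∑ y : 𝒴, ∑ m : 𝒮, ∑ x : 𝒳, f y m x)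
        = ∑ x : 𝒳, ∑ m : 𝒮, ∑ y : 𝒴, f y m x := by
      intro f
      have h1 : (∑ y : 𝒴, ∑ m : 𝒮, ∑ x : 𝒳, f y m x)
          = ∑ y : 𝒴, ∑ x : 𝒳, ∑ m : 𝒮, f y m x :=
        Finset.sum_congr rfl fun y _ => Finset.sum_comm
      have h2 : (∑ y : 𝒴, ∑ x : 𝒳, ∑ m : 𝒮, f y m x)
          = ∑ x : 𝒳, ∑ y : 𝒴, ∑ m : 𝒮, f y m x := Finset.sum_comm
      have h3 : (∑ x : 𝒳, ∑ y : 𝒴, ∑ m : 𝒮, f y m x)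
          = ∑ x : 𝒳, ∑ m : 𝒮, ∑ y : 𝒴, f y m x :=
        Finset.sum_congr rfl fun x _ => Finset.sum_comm
      rw [h1, h2, h3]
    simp only [Fintype.sum_prod_type, Fintype.sum_bool, Finset.sum_add_distrib]
    rw [swap3 (fun y m x => g (y, m, true, x)), swap3 (fun y m x => g (y, m, false, x))]
  -- main algebraic identity
  have hfinal : (∑ o : Obs 𝒴 𝒮 𝒳, p o * (effIF val p o * deriv (fun t => Real.log (pt t o)) 0))
      = (∑ x : 𝒳, ((∑ m : 𝒮, ((((∑ y : 𝒴, val y * q (y, m, true, x)) * jointMEX p m true x - (∑ y : 𝒴, val y * p (y, m, true, x)) * (∑ y : 𝒴, q (y, m, true, x))) / (jointMEX p m true x) ^ 2) * fM p m false x + bFun val p m x * (((∑ y : 𝒴, q (y, m, false, x)) * jointEX p false x - jointMEX p m false x * (∑ y : 𝒴, ∑ m' : 𝒮, q (y, m', false, x))) / (jointEX p false x) ^ 2))) * margX p x + etaFun val p x * (∑ y : 𝒴, ∑ m : 𝒮, ∑ e : Bool, q (y, m, e, x)))) := by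
    have e1 : (∑ o : Obs 𝒴 𝒮 𝒳, p o * (effIF val p o * deriv (fun t => Real.log (pt t o)) 0))
        = ∑ o : Obs 𝒴 𝒮 𝒳, (effIF val p o + thetaP val p) * q o := by
      have e2 : (∑ o : Obs 𝒴 𝒮 𝒳, (effIF val p o + thetaP val p) * q o)
          = (∑ o : Obs 𝒴 𝒮 𝒳, effIF val p o * q o) + thetaP val p * ∑ o : Obs 𝒴 𝒮 𝒳, q o := by
        rw [Finset.mul_sum, ← Finset.sum_add_distrib]
        exact Finset.sum_congr rfl fun o _ => by ring
      rw [e2, hzero, mul_zero, add_zero]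
      refine Finset.sum_congr rfl fun o _ => ?_
      rw [hlog o]
      field_simp
      try exact mul_div_cancel_left₀ _ (hpos o).ne'
      try ring
      rw [mul_right_comm _ _ (p o)⁻¹, mul_right_comm (p o), mul_inv_cancel₀ (hpos o).ne', one_mul]
    rw [e1, hobs]
    refine Finset.sum_congr rfl fun x _ => ?_
    have hm : ∀ m : 𝒮,
        ((∑ y : 𝒴, (effIF val p (y, m, true, x) + thetaP val p) * q (y, m, true, x))
          + ∑ y : 𝒴, (effIF val p (y, m, false, x) + thetaP val p) * q (y, m, false, x))
        = ((((∑ y : 𝒴, val y * q (y, m, true, x)) * jointMEX p m true x - (∑ y : 𝒴, val y * p (y, m, true, x)) * (∑ y : 𝒴, q (y, m, true, x))) / (jointMEX p m true x) ^ 2) * fM p m false x + bFun val p m x * (((∑ y : 𝒴, q (y, m, false, x)) * jointEX p false x - jointMEX p m false x * (∑ y : 𝒴, ∑ m' : 𝒮, q (y, m', false, x))) / (jointEX p false x) ^ 2)) * margX p x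
          + etaFun val p x * ((∑ y : 𝒴, q (y, m, true, x)) + (∑ y : 𝒴, q (y, m, false, x)))
          - (margX p x * etaFun val p x / jointEX p false x) * (∑ y : 𝒴, q (y, m, false, x))
          + (margX p x * (∑ y : 𝒴, ∑ m' : 𝒮, q (y, m', false, x)) / (jointEX p false x) ^ 2) *
              ((∑ y : 𝒴, val y * p (y, m, true, x)) * jointMEX p m false x / jointMEX p m true x) := by
      intro m
      have hT : ∀ y : 𝒴, (effIF val p (y, m, true, x) + thetaP val p) * q (y, m, true, x)
          = (fM p m false x / (fE p true x * fM p m true x)) * (val y * q (y, m, true, x))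
            + (etaFun val p x - (fM p m false x / (fE p true x * fM p m true x)) * bFun val p m x)
              * q (y, m, true, x) := by
        intro y
        simp only [effIF]
        norm_num
        try ring
      have hFe : ∀ y : 𝒴, (effIF val p (y, m, false, x) + thetaP val p) * q (y, m, false, x)
          = ((1 / fE p false x) * (bFun val p m x - etaFun val p x) + etaFun val p x)
              * q (y, m, false, x) := by
        intro y
        simp only [effIF]
        norm_num
        try ring
      rw [Finset.sum_congr rfl fun y _ => hT y, Finset.sum_congr rfl fun y _ => hFe y,
          Finset.sum_add_distrib, ← Finset.mul_sum, ← Finset.mul_sum, ← Finset.mul_sum]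
      simp only [fM, fE, bFun]
      have hne1 := hMEX m true x
      have hne2 := hMEX m false x
      have hne3 := hEX true x
      have hne4 := hEX false x
      have hne5 := hMX x
      field_simp
      ring
    rw [Finset.sum_congr rfl fun m _ => hm m]
    have hs1 : ((∑ m : 𝒮, ∑ y : 𝒴, q (y, m, true, x)) + ∑ m : 𝒮, ∑ y : 𝒴, q (y, m, false, x))
        = (∑ y : 𝒴, ∑ m : 𝒮, ∑ e : Bool, q (y, m, e, x)) := by
      simp only [Fintype.sum_bool, Finset.sum_add_distrib]
      congr 1 <;> exact Finset.sum_comm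
    have hs2 : (∑ m : 𝒮, (∑ y : 𝒴, q (y, m, false, x)))
        = ∑ y : 𝒴, ∑ m' : 𝒮, q (y, m', false, x) := Finset.sum_comm
    have hs3 : (∑ m : 𝒮, ((∑ y : 𝒴, val y * p (y, m, true, x)) * jointMEX p m false x
          / jointMEX p m true x)) = etaFun val p x * jointEX p false x := by
      have h4 : ∀ m : 𝒮, (∑ y : 𝒴, val y * p (y, m, true, x)) * jointMEX p m false x
            / jointMEX p m true x
          = (bFun val p m x * fM p m false x) * jointEX p false x := by
        intro m
        simp only [bFun, fM]
        have hne1 := hMEX m true x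
        have hne4 := hEX false x
        field_simp
        try ring
      rw [Finset.sum_congr rfl fun m _ => h4 m, ← Finset.sum_mul, etaFun]
    simp only [Finset.sum_add_distrib, Finset.sum_sub_distrib, ← Finset.mul_sum, ← Finset.sum_mul]
    rw [hs1, hs2, hs3]
    have h5 : (margX p x * etaFun val p x / jointEX p false x) *
          (∑ y : 𝒴, ∑ m' : 𝒮, q (y, m', false, x))
        = (margX p x * (∑ y : 𝒴, ∑ m' : 𝒮, q (y, m', false, x)) / (jointEX p false x) ^ 2) *
          (etaFun val p x * jointEX p false x) := by
      have := hEX false x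
      field_simp
    rw [h5]
    ring
  rw [hfinal]
  exact Htheta
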